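/- Let X be a Polish space and let E be an equivalence relation on X (no definability assumption on E) which is thin and all of whose equivalence classes are countable. Then every Borel set C ⊆ X such that E ∩ (C × C) is a Borel subset of X × X is countable. (Consequently, for any σ-ideal on X containing all singletons, there is no I-positive Borel set on which E restricts to a Borel equivalence relation.) -/

import Mathlib

open MeasureTheory Set Topology Filter TopologicalSpace

namespace ThinProofAux

/-- The cylinder of a finite binary string inside Cantor space. -/
def cyl (l : List Bool) : Set (ℕ → Bool) := {x | ∀ i < l.length, x i = l.getD i false}

/-- Restriction of a point of Cantor space to a finite string. -/
def res (x : ℕ → Bool) (n : ℕ) : List Bool := List.ofFn (fun i : Fin n => x i)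




@[simp] lemma length_res (x : ℕ → Bool) (n : ℕ) : (res x n).length = n := by
  simp [res]

lemma res_succ (x : ℕ → Bool) (n : ℕ) : res x (n + 1) = res x n ++ [x n] := by
  rw [res, List.ofFn_succ']
  simp [List.concat_eq_append, res]

lemma getD_res (x : ℕ → Bool) {n i : ℕ} (h : i < n) : (res x n).getD i false = x i := by
  rw [List.getD_eq_getElem _ _ (by simpa using h)]
  simp [res]

lemma mem_cyl_res (x : ℕ → Bool) (n : ℕ) : x ∈ cyl (res x n) := by
  intro i hi
  rw [getD_res x (by simpa using hi)]

lemma getD_eq_of_prefix {l₁ l₂ : List Bool} (h : l₁ <+: l₂) {i : ℕ} (hi : i < l₁.length) :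
    l₂.getD i false = l₁.getD i false := by
  rw [List.getD_eq_getElem _ _ hi, List.getD_eq_getElem _ _ (hi.trans_le h.length_le)]
  exact (h.getElem hi).symm

lemma cyl_anti {l₁ l₂ : List Bool} (h : l₁ <+: l₂) : cyl l₂ ⊆ cyl l₁ := by
  intro x hx i hi
  rw [hx i (hi.trans_le h.length_le), getD_eq_of_prefix h hi]

lemma res_prefix_res (x : ℕ → Bool) {n m : ℕ} (h : n ≤ m) : res x n <+: res x m := by
  induction m with
  | zero => rw [Nat.le_zero.mp h]
  | succ m ih =>
    rcases Nat.lt_or_ge n (m+1) with h' | h'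
    · exact (ih (Nat.lt_succ_iff.mp h')).trans (res_succ x m ▸ List.prefix_append _ _)
    · rw [le_antisymm h h']

lemma prefix_res_of_mem_cyl {l : List Bool} {x : ℕ → Bool} (hx : x ∈ cyl l) {n : ℕ}
    (hn : l.length ≤ n) : l <+: res x n := by
  rw [List.prefix_iff_eq_take]
  have hlen : l.length ≤ (res x n).length := by simpa using hn
  apply List.ext_getElem (by simp [Nat.min_eq_left hn])
  intro i h1 h2
  have hi : i < l.length := h1
  have h3 : i < (res x n).length := lt_of_lt_of_le hi hlen
  have := hx i hi
  rw [List.getD_eq_getElem _ _ hi] at this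
  rw [List.getElem_take, show (res x n)[i] = x i from by simp [res], this]

lemma isOpen_cyl (l : List Bool) : IsOpen (cyl l) := by
  have : cyl l = ⋂ i ∈ Finset.range l.length,
      (fun x : ℕ → Bool => x i) ⁻¹' {l.getD i false} := by
    ext x; simp [cyl]
  rw [this]
  exact isOpen_biInter_finset fun i _ =>
    (continuous_apply i).isOpen_preimage _ (isOpen_discrete _)

lemma cyl_nonempty (l : List Bool) : (cyl l).Nonempty :=
  ⟨fun i => l.getD i false, fun i _ => rfl⟩

lemma exists_cyl_subset {x : ℕ → Bool} {U : Set (ℕ → Bool)} (hU : U ∈ 𝓝 x) :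
    ∃ n, cyl (res x n) ⊆ U := by
  rw [nhds_pi, Filter.mem_pi] at hU
  obtain ⟨I, hIfin, t, ht, hsub⟩ := hU
  obtain ⟨n, hn⟩ := hIfin.bddAbove
  refine ⟨n + 1, fun y hy => hsub fun i hi => ?_⟩
  have hxi : x i ∈ t i := mem_of_mem_nhds (ht i)
  have : y i = x i := by
    have := hy i (by simp only [length_res]; exact Nat.lt_succ_of_le (hn hi))
    rwa [getD_res x (Nat.lt_succ_of_le (hn hi))] at this
  rwa [this]

lemma exists_ne_mem_cyl {l : List Bool} {x : ℕ → Bool} (hx : x ∈ cyl l) :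
    ∃ y ∈ cyl l, y ≠ x := by
  refine ⟨Function.update x l.length (!x l.length), fun i hi => ?_, fun h => ?_⟩
  · rw [Function.update_of_ne (by omega)]; exact hx i hi
  · have := congrFun h l.length
    rw [Function.update_self] at this
    exact (Bool.not_ne_self _) this



-- union of two closed nwd sets is closed nwd (via dense open complements)
lemma isNowhereDense_union {X : Type*} [TopologicalSpace X] {s t : Set X}
    (hs : IsClosed s ∧ IsNowhereDense s) (ht : IsClosed t ∧ IsNowhereDense t) :
    IsClosed (s ∪ t) ∧ IsNowhereDense (s ∪ t) := by
  rw [isClosed_isNowhereDense_iff_compl] at hs ht ⊢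
  rw [compl_union]
  exact ⟨hs.1.inter ht.1, hs.2.inter_of_isOpen_left ht.2 hs.1⟩

lemma isNowhereDense_biUnion_range {X : Type*} [TopologicalSpace X] {S : ℕ → Set X}
    (h : ∀ n, IsClosed (S n) ∧ IsNowhereDense (S n)) (n : ℕ) :
    IsClosed (⋃ i ∈ Finset.range (n+1), S i) ∧ IsNowhereDense (⋃ i ∈ Finset.range (n+1), S i) := by
  induction n with
  | zero => simpa using h 0
  | succ n ih =>
    rw [Finset.range_add_one, Finset.set_biUnion_insert]
    exact isNowhereDense_union (h (n+1)) ih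





/-- box-avoidance: a closed nowhere dense set in the square of Cantor space can be avoided
by extending any two strings. -/
lemma avoid_box {K : Set ((ℕ → Bool) × (ℕ → Bool))} (hKc : IsClosed K)
    (hKnd : IsNowhereDense K) (a b : List Bool) :
    ∃ a' b', a <+: a' ∧ b <+: b' ∧ (cyl a' ×ˢ cyl b') ∩ K = ∅ := by
  have hcompl : IsOpen Kᶜ ∧ Dense Kᶜ := isClosed_isNowhereDense_iff_compl.mp ⟨hKc, hKnd⟩
  have hbox : IsOpen (cyl a ×ˢ cyl b) := (isOpen_cyl a).prod (isOpen_cyl b)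
  have hne : (cyl a ×ˢ cyl b).Nonempty := (cyl_nonempty a).prod (cyl_nonempty b)
  obtain ⟨p, hp1, hp2⟩ := hcompl.2.exists_mem_open hbox hne
  have hopen : IsOpen (Kᶜ ∩ cyl a ×ˢ cyl b) := hcompl.1.inter hbox
  have hmem : Kᶜ ∩ cyl a ×ˢ cyl b ∈ 𝓝 p := hopen.mem_nhds ⟨hp1, hp2⟩
  rw [nhds_prod_eq, Filter.mem_prod_iff] at hmem
  obtain ⟨U, hU, V, hV, hUV⟩ := hmem
  obtain ⟨n, hn⟩ := exists_cyl_subset hU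
  obtain ⟨m, hm⟩ := exists_cyl_subset hV
  have hxa : p.1 ∈ cyl a := hp2.1
  have hyb : p.2 ∈ cyl b := hp2.2
  refine ⟨res p.1 (max (max n m) a.length), res p.2 (max (max n m) b.length),
    prefix_res_of_mem_cyl hxa (le_max_right _ _),
    prefix_res_of_mem_cyl hyb (le_max_right _ _), ?_⟩
  rw [eq_empty_iff_forall_notMem]
  rintro ⟨x, y⟩ ⟨⟨hx, hy⟩, hK⟩
  have hx' : x ∈ cyl (res p.1 n) :=
    cyl_anti (res_prefix_res p.1 ((le_max_left n m).trans (le_max_left _ _))) hx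
  have hy' : y ∈ cyl (res p.2 m) :=
    cyl_anti (res_prefix_res p.2 ((le_max_right n m).trans (le_max_left _ _))) hy
  exact (hUV (Set.mk_mem_prod (hn hx') (hm hy'))).1 hK

/-- iterated repair over a list of pairs of indices. -/
lemma repair {ι : Type*} [DecidableEq ι] {K : Set ((ℕ → Bool) × (ℕ → Bool))}
    (hKc : IsClosed K) (hKnd : IsNowhereDense K) (c : ι → List Bool) (l : List (ι × ι)) :
    ∃ e : ι → List Bool, (∀ i, c i <+: e i) ∧
      ∀ p ∈ l, p.1 ≠ p.2 → (cyl (e p.1) ×ˢ cyl (e p.2)) ∩ K = ∅ := by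
  induction l with
  | nil => exact ⟨c, fun i => List.prefix_refl _, fun p hp => absurd hp List.not_mem_nil⟩
  | cons q l ih =>
    obtain ⟨e, he1, he2⟩ := ih
    by_cases hq : q.1 = q.2
    · refine ⟨e, he1, ?_⟩
      rintro p hp hne
      rcases List.mem_cons.mp hp with rfl | hp
      · exact absurd hq hne
      · exact he2 p hp hne
    · obtain ⟨a', b', ha', hb', hav⟩ := avoid_box hKc hKnd (e q.1) (e q.2)
      set e' : ι → List Bool := Function.update (Function.update e q.1 a') q.2 b' with he'
      have h1 : e' q.1 = a' := by
        rw [he', Function.update_of_ne hq, Function.update_self]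
      have h2 : e' q.2 = b' := by rw [he', Function.update_self]
      have hext : ∀ i, e i <+: e' i := by
        intro i
        rcases eq_or_ne i q.2 with rfl | hi2
        · rw [h2]; exact hb'
        rcases eq_or_ne i q.1 with rfl | hi1
        · rw [h1]; exact ha'
        · rw [he', Function.update_of_ne hi2, Function.update_of_ne hi1]
      refine ⟨e', fun i => (he1 i).trans (hext i), ?_⟩
      rintro p hp hne
      rcases List.mem_cons.mp hp with rfl | hp
      · rw [h1, h2]; exact hav
      · have := he2 p hp hne
        rw [eq_empty_iff_forall_notMem] at this ⊢
        rintro z ⟨⟨hz1, hz2⟩, hzK⟩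
        exact this z ⟨⟨cyl_anti (hext p.1) hz1, cyl_anti (hext p.2) hz2⟩, hzK⟩





section Scheme

variable (T : ℕ → Set ((ℕ → Bool) × (ℕ → Bool)))

lemma step_exists (hT : ∀ n, IsClosed (T n) ∧ IsNowhereDense (T n)) (n : ℕ) (u : (Fin n → Bool) → List Bool) :
    ∃ e : (Fin (n+1) → Bool) → List Bool,
      (∀ s, u (Fin.init s) ++ [s (Fin.last n)] <+: e s) ∧
      ∀ s t : Fin (n+1) → Bool, s ≠ t → (cyl (e s) ×ˢ cyl (e t)) ∩ T (n+1) = ∅ := by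
  obtain ⟨e, he1, he2⟩ := repair (hT (n+1)).1 (hT (n+1)).2
    (fun s : Fin (n+1) → Bool => u (Fin.init s) ++ [s (Fin.last n)])
    (Finset.univ : Finset ((Fin (n+1) → Bool) × (Fin (n+1) → Bool))).toList
  exact ⟨e, he1, fun s t hst =>
    he2 (s, t) (Finset.mem_toList.mpr (Finset.mem_univ _)) hst⟩

noncomputable def scheme (hT : ∀ n, IsClosed (T n) ∧ IsNowhereDense (T n)) :
    (n : ℕ) → (Fin n → Bool) → List Bool
  | 0 => fun _ => []
  | (n+1) => Classical.choose (step_exists T hT n (scheme hT n))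

lemma scheme_succ_prefix (hT : ∀ n, IsClosed (T n) ∧ IsNowhereDense (T n)) (n : ℕ) (s : Fin (n+1) → Bool) :
    scheme T hT n (Fin.init s) ++ [s (Fin.last n)] <+: scheme T hT (n+1) s :=
  (Classical.choose_spec (step_exists T hT n (scheme T hT n))).1 s

lemma scheme_avoid (hT : ∀ n, IsClosed (T n) ∧ IsNowhereDense (T n)) (n : ℕ) (s t : Fin (n+1) → Bool) (hst : s ≠ t) :
    (cyl (scheme T hT (n+1) s) ×ˢ cyl (scheme T hT (n+1) t)) ∩ T (n+1) = ∅ :=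
  (Classical.choose_spec (step_exists T hT n (scheme T hT n))).2 s t hst

lemma scheme_length (hT : ∀ n, IsClosed (T n) ∧ IsNowhereDense (T n)) (n : ℕ) (s : Fin n → Bool) : n ≤ (scheme T hT n s).length := by
  induction n with
  | zero => exact Nat.zero_le _
  | succ n ih =>
    have h := (scheme_succ_prefix T hT n s).length_le
    rw [List.length_append, List.length_cons, List.length_nil] at h
    have := ih (Fin.init s)
    omega

/-- restriction of a point to `Fin n → Bool`. -/
def resF (x : ℕ → Bool) (n : ℕ) : Fin n → Bool := fun i => x i

lemma init_resF (x : ℕ → Bool) (n : ℕ) : Fin.init (resF x (n+1)) = resF x n := by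
  funext i
  simp [Fin.init, resF]

lemma scheme_chain (hT : ∀ n, IsClosed (T n) ∧ IsNowhereDense (T n)) (x : ℕ → Bool) {n m : ℕ} (h : n ≤ m) :
    scheme T hT n (resF x n) <+: scheme T hT m (resF x m) := by
  induction m with
  | zero => rw [Nat.le_zero.mp h]
  | succ m ih =>
    rcases Nat.lt_or_ge n (m+1) with h' | h'
    · refine (ih (Nat.lt_succ_iff.mp h')).trans ?_
      have := scheme_succ_prefix T hT m (resF x (m+1))
      rw [init_resF] at this
      exact (List.prefix_append _ _).trans this
    · rw [le_antisymm h h']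

/-- The limit map of the scheme. -/
noncomputable def limitMap (hT : ∀ n, IsClosed (T n) ∧ IsNowhereDense (T n)) (x : ℕ → Bool) : ℕ → Bool :=
  fun k => (scheme T hT (k+1) (resF x (k+1))).getD k false

lemma limitMap_mem_cyl (hT : ∀ n, IsClosed (T n) ∧ IsNowhereDense (T n)) (x : ℕ → Bool) (n : ℕ) :
    limitMap T hT x ∈ cyl (scheme T hT n (resF x n)) := by
  intro k hk
  unfold limitMap
  rcases Nat.le_total n (k+1) with h | h
  · exact getD_eq_of_prefix (scheme_chain T hT x h) hk
  · have hk' : k < (scheme T hT (k+1) (resF x (k+1))).length :=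
      lt_of_lt_of_le (Nat.lt_succ_self k) (scheme_length T hT (k+1) _)
    exact (getD_eq_of_prefix (scheme_chain T hT x h) hk').symm

lemma continuous_limitMap (hT : ∀ n, IsClosed (T n) ∧ IsNowhereDense (T n)) : Continuous (limitMap T hT) := by
  apply continuous_pi
  intro k
  have : (fun x => limitMap T hT x k) =
      (fun s : Fin (k+1) → Bool => (scheme T hT (k+1) s).getD k false) ∘
        (fun x => resF x (k+1)) := rfl
  rw [this]
  exact (continuous_of_discreteTopology).comp (continuous_pi fun i => continuous_apply (i : ℕ))

/-- Main independence property. -/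
lemma limitMap_avoid (hT : ∀ n, IsClosed (T n) ∧ IsNowhereDense (T n)) {x y : ℕ → Bool} (hxy : x ≠ y) (hmono : ∀ {n m : ℕ}, n ≤ m → T n ⊆ T m)
    (n : ℕ) : (limitMap T hT x, limitMap T hT y) ∉ T n := by
  obtain ⟨j, hj⟩ : ∃ j, x j ≠ y j := by
    by_contra h
    push_neg at h
    exact hxy (funext h)
  -- for m ≥ j+1, resF x m ≠ resF y m
  have hne : ∀ m : ℕ, j < m → resF x m ≠ resF y m := by
    intro m hm h
    exact hj (congrFun h ⟨j, hm⟩)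
  have key : ∀ m : ℕ, j < m → (limitMap T hT x, limitMap T hT y) ∉ T m := by
    intro m hm
    obtain ⟨m', rfl⟩ : ∃ m', m = m' + 1 := ⟨m - 1, by omega⟩
    have hav := scheme_avoid T hT m' (resF x (m'+1)) (resF y (m'+1)) (hne _ hm)
    intro hmem
    rw [eq_empty_iff_forall_notMem] at hav
    exact hav _ ⟨⟨limitMap_mem_cyl T hT x (m'+1), limitMap_mem_cyl T hT y (m'+1)⟩, hmem⟩
  rcases Nat.lt_or_ge j n with h | h
  · exact key n h
  · intro hmem
    exact key (j+1) (Nat.lt_succ_self j) (hmono (by omega) hmem)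

end Scheme



variable {α β : Type*} [TopologicalSpace α] [TopologicalSpace β]

lemma nwd_isMeagre {s : Set α} (h : IsNowhereDense s) : IsMeagre s := by
  rw [isMeagre_iff_countable_union_isNowhereDense]
  exact ⟨{s}, by simpa using h, countable_singleton s, by simp⟩

lemma meagre_union {s t : Set α} (hs : IsMeagre s) (ht : IsMeagre t) : IsMeagre (s ∪ t) := by
  rw [IsMeagre, compl_union]
  exact Filter.inter_mem hs ht

lemma isMeagre_biUnion {ι : Type*} {t : Set ι} (ht : t.Countable) {s : ι → Set α}
    (h : ∀ i ∈ t, IsMeagre (s i)) : IsMeagre (⋃ i ∈ t, s i) := by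
  rw [IsMeagre, compl_iUnion₂]
  exact (countable_bInter_mem ht).mpr h

lemma countable_isMeagre [T1Space α] (hperf : ∀ x : α, ∃ᶠ y in 𝓝 x, y ≠ x)
    {s : Set α} (hs : s.Countable) : IsMeagre s := by
  have : s = ⋃ x ∈ s, {x} := by simp
  rw [this]
  apply isMeagre_biUnion hs
  intro x _
  apply nwd_isMeagre
  rw [(isClosed_singleton (x := x)).isNowhereDense_iff, eq_empty_iff_forall_notMem]
  intro y hy
  have hyx : y ∈ ({x} : Set α) := interior_subset hy
  rw [mem_singleton_iff] at hyx
  subst hyx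
  obtain ⟨z, hz, hzy⟩ := ((hperf y).and_eventually (isOpen_interior.mem_nhds hy)).exists
  have : z ∈ ({y} : Set α) := interior_subset hzy
  exact hz (mem_singleton_iff.mp this)

/-- sections of a closed nowhere dense set are nowhere dense off a meager set. -/
lemma sections_nowhereDense [SecondCountableTopology β] {K : Set (α × β)}
    (hKc : IsClosed K) (hKnd : IsNowhereDense K) :
    IsMeagre {x : α | ¬ IsNowhereDense {y : β | (x, y) ∈ K}} := by
  obtain ⟨b, hbc, hbne, hb⟩ := exists_countable_basis β
  set S : Set β → Set α := fun V => {x | ∀ y ∈ V, (x, y) ∈ K} with hS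
  have hsub : {x : α | ¬ IsNowhereDense {y : β | (x, y) ∈ K}} ⊆ ⋃ V ∈ b, S V := by
    intro x hx
    have hsecc : IsClosed {y : β | (x, y) ∈ K} := hKc.preimage (Continuous.prodMk_right x)
    rw [mem_setOf_eq, hsecc.isNowhereDense_iff, ← ne_eq, ← nonempty_iff_ne_empty] at hx
    obtain ⟨y, hy⟩ := hx
    obtain ⟨V, hVb, hyV, hVsub⟩ := hb.exists_subset_of_mem_open hy isOpen_interior
    exact mem_biUnion hVb fun z hz => (hVsub.trans interior_subset) hz
  refine IsMeagre.mono hsub (isMeagre_biUnion hbc fun V hVb => ?_)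
  have hVne : V.Nonempty := nonempty_iff_ne_empty.mpr (fun h => hbne (h ▸ hVb))
  have hVclosed : IsClosed (S V) := by
    have : S V = ⋂ y ∈ V, {x : α | (x, y) ∈ K} := by
      ext x; simp [hS]
    rw [this]
    exact isClosed_biInter fun y _ => hKc.preimage (Continuous.prodMk_left y)
  apply nwd_isMeagre
  rw [hVclosed.isNowhereDense_iff, eq_empty_iff_forall_notMem]
  intro x hx
  have hbox : interior (S V) ×ˢ V ⊆ K := by
    rintro ⟨z, y⟩ ⟨hz, hy⟩
    exact interior_subset hz y hy
  have : interior (S V) ×ˢ V ⊆ interior K :=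
    (isOpen_interior.prod (hb.isOpen hVb)).subset_interior_iff.mpr hbox
  rw [hKc.isNowhereDense_iff.mp hKnd, subset_empty_iff, prod_eq_empty_iff] at this
  rcases this with h | h
  · exact absurd (h ▸ hx) (notMem_empty x)
  · exact absurd (h ▸ hVne) (by simp)

/-- Sections of a meager set are meager off a meager set. -/
lemma sections_meager [SecondCountableTopology β] {M : Set (α × β)} (hM : IsMeagre M) :
    ∃ R : Set α, IsMeagre R ∧ ∀ x ∉ R, IsMeagre {y : β | (x, y) ∈ M} := by
  rw [isMeagre_iff_countable_union_isNowhereDense] at hM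
  obtain ⟨S, hSnd, hSc, hSsub⟩ := hM
  refine ⟨⋃ s ∈ S, {x : α | ¬ IsNowhereDense {y : β | (x, y) ∈ closure s}}, ?_, ?_⟩
  · exact isMeagre_biUnion hSc fun s hs =>
      sections_nowhereDense isClosed_closure (hSnd s hs).closure
  · intro x hx
    rw [mem_iUnion₂] at hx
    push_neg at hx
    have hsec : {y : β | (x, y) ∈ M} ⊆ ⋃ s ∈ S, {y : β | (x, y) ∈ closure s} := by
      intro y hy
      obtain ⟨s, hsS, hys⟩ := hSsub hy
      exact mem_biUnion hsS (subset_closure hys)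
    refine IsMeagre.mono hsec (isMeagre_biUnion hSc fun s hs => ?_)
    have := hx s hs
    rw [mem_setOf_eq, not_not] at this
    exact nwd_isMeagre this

/-- Kuratowski-Ulam, the direction we need. -/
lemma kuratowski_ulam [SecondCountableTopology β] [BaireSpace α] [BaireSpace β]
    {s : Set (α × β)} (hs : BaireMeasurableSet s)
    (hsec : ∀ x : α, IsMeagre {y : β | (x, y) ∈ s}) : IsMeagre s := by
  obtain ⟨u, huo, hsu⟩ := hs.residualEq_isOpen
  have hM : IsMeagre (symmDiff s u) := by
    rw [IsMeagre]
    have : (symmDiff s u)ᶜ = {p | p ∈ s ↔ p ∈ u} := by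
      ext p
      simp only [symmDiff_def, Set.sup_eq_union, mem_compl_iff, mem_union, mem_diff,
        mem_setOf_eq]
      tauto
    rw [this]
    rw [Filter.eventuallyEq_set] at hsu
    exact hsu
  obtain ⟨R, hRm, hR⟩ := sections_meager hM
  have husec : ∀ x ∉ R, {y : β | (x, y) ∈ u} = ∅ := by
    intro x hx
    have hopen : IsOpen {y : β | (x, y) ∈ u} := huo.preimage (Continuous.prodMk_right x)
    have hmeag : IsMeagre {y : β | (x, y) ∈ u} := by
      refine IsMeagre.mono ?_ (meagre_union (hsec x) (hR x hx))
      intro y hy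
      by_cases hys : (x, y) ∈ s
      · exact Or.inl hys
      · exact Or.inr (Or.inr ⟨hy, hys⟩)
    have hdense : Dense {y : β | (x, y) ∈ u}ᶜ := dense_of_mem_residual hmeag
    rw [eq_empty_iff_forall_notMem]
    intro y hy
    obtain ⟨z, hz1, hz2⟩ := hdense.exists_mem_open hopen ⟨y, hy⟩
    exact hz1 hz2
  have hu : u = ∅ := by
    rw [eq_empty_iff_forall_notMem]
    rintro ⟨a, y⟩ hay
    obtain ⟨A, B, hA, hB, haA, hyB, hAB⟩ := isOpen_prod_iff.mp huo a y hay
    have hdense : Dense Rᶜ := dense_of_mem_residual hRm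
    obtain ⟨x, hx1, hx2⟩ := hdense.exists_mem_open hA ⟨a, haA⟩
    have : y ∈ {y | (x, y) ∈ u} := hAB (mk_mem_prod hx2 hyB)
    rw [husec x hx1] at this
    exact this
  refine IsMeagre.mono ?_ hM
  intro p hp
  rw [symmDiff_def]
  exact le_sup_left (a := s \ u) ⟨hp, by simp [hu]⟩


lemma cantor_nhds_ne (x : ℕ → Bool) : ∃ᶠ y in 𝓝 x, y ≠ x := by
  rw [Filter.frequently_iff]
  intro U hU
  obtain ⟨n, hn⟩ := exists_cyl_subset hU
  obtain ⟨y, hy, hyx⟩ := exists_ne_mem_cyl (mem_cyl_res x n)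
  exact ⟨y, hn hy, hyx⟩

/-- Mycielski-type theorem on Cantor space. -/
lemma mycielski {F : Set ((ℕ → Bool) × (ℕ → Bool))} (hF : IsMeagre F) :
    ∃ g : (ℕ → Bool) → (ℕ → Bool), Continuous g ∧
      ∀ x y : ℕ → Bool, x ≠ y → (g x, g y) ∉ F := by
  rw [isMeagre_iff_countable_union_isNowhereDense] at hF
  obtain ⟨S, hSnd, hSc, hSsub⟩ := hF
  rcases S.eq_empty_or_nonempty with rfl | hSne
  · exact ⟨id, continuous_id, fun x y _ h => by simpa using hSsub h⟩
  obtain ⟨e, rfl⟩ := hSc.exists_eq_range hSne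
  set T : ℕ → Set ((ℕ → Bool) × (ℕ → Bool)) :=
    fun n => ⋃ i ∈ Finset.range (n+1), closure (e i) with hTdef
  have hT : ∀ n, IsClosed (T n) ∧ IsNowhereDense (T n) := fun n =>
    isNowhereDense_biUnion_range
      (fun i => ⟨isClosed_closure, (hSnd _ (mem_range_self i)).closure⟩) n
  have hmono : ∀ {n m : ℕ}, n ≤ m → T n ⊆ T m := by
    intro n m h p hp
    have hp' : p ∈ ⋃ i ∈ Finset.range (n+1), closure (e i) := hp
    rw [mem_iUnion₂] at hp'
    obtain ⟨i, hi, hpi⟩ := hp'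
    rw [Finset.mem_range] at hi
    show p ∈ ⋃ i ∈ Finset.range (m+1), closure (e i)
    rw [mem_iUnion₂]
    exact ⟨i, Finset.mem_range.mpr (by omega), hpi⟩
  refine ⟨limitMap T hT, continuous_limitMap T hT, fun x y hxy hmem => ?_⟩
  obtain ⟨s, ⟨i, rfl⟩, hps⟩ := hSsub hmem
  refine limitMap_avoid T hT hxy hmono i ?_
  show _ ∈ ⋃ j ∈ Finset.range (i+1), closure (e j)
  rw [mem_iUnion₂]
  exact ⟨i, Finset.self_mem_range_succ i, subset_closure hps⟩

/-- The range of a continuous injection from Cantor space is a nonempty perfect set. -/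
lemma perfect_range {X : Type*} [TopologicalSpace X] [T2Space X] {F₀ : (ℕ → Bool) → X}
    (hc : Continuous F₀) (hinj : Function.Injective F₀) :
    Perfect (range F₀) ∧ (range F₀).Nonempty := by
  refine ⟨⟨(hc.isClosedEmbedding hinj).isClosed_range, ?_⟩, ⟨F₀ (fun _ => false), mem_range_self _⟩⟩
  rintro p ⟨a, rfl⟩
  rw [accPt_iff_nhds]
  intro U hU
  have hpre : F₀ ⁻¹' U ∈ 𝓝 a := hc.continuousAt.preimage_mem_nhds hU
  obtain ⟨n, hn⟩ := exists_cyl_subset hpre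
  obtain ⟨y, hy, hyx⟩ := exists_ne_mem_cyl (mem_cyl_res a n)
  exact ⟨F₀ y, ⟨hn hy, mem_range_self _⟩, fun h => hyx (hinj h)⟩

/-- An uncountable Borel set in a Polish space admits a continuous injection from Cantor
space. -/
lemma exists_cantor_inj {X : Type*} [TopologicalSpace X] [PolishSpace X]
    [MeasurableSpace X] [BorelSpace X] {C : Set X} (hC : MeasurableSet C)
    (hunc : ¬ C.Countable) :
    ∃ f : (ℕ → Bool) → X, range f ⊆ C ∧ Continuous f ∧ Function.Injective f := by
  obtain ⟨t', ht'le, hpol, hclosed, -⟩ := hC.isClopenable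
  obtain ⟨f, hfr, hfc0, hfinj⟩ :=
    @IsClosed.exists_nat_bool_injection_of_not_countable X t' hpol C hclosed hunc
  exact ⟨f, hfr, continuous_le_rng ht'le hfc0, hfinj⟩

end ThinProofAux


open ThinProofAux in
/-- A thin equivalence relation with all classes countable is not Borel on any
uncountable Borel set: every Borel set `C` on which `E` restricts to a Borel
relation is countable. -/
theorem thin_countable_classes_equivalence_borel_restriction_countable
    {X : Type*} [TopologicalSpace X] [PolishSpace X]
    [MeasurableSpace X] [BorelSpace X]
    (E : X → X → Prop) (hE : Equivalence E)
    (hthin : ¬ ∃ P : Set X, Perfect P ∧ P.Nonempty ∧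
      P.Pairwise fun x y => ¬ E x y)
    (hcount : ∀ x : X, {y : X | E y x}.Countable) :
    ∀ C : Set X, MeasurableSet C →
      MeasurableSet ({p : X × X | E p.1 p.2} ∩ C ×ˢ C) → C.Countable := by
  intro C hC hEC
  by_contra hunc
  obtain ⟨f, hfr, hfc, hfinj⟩ := exists_cantor_inj hC hunc
  set F : Set ((ℕ → Bool) × (ℕ → Bool)) :=
    (fun p : (ℕ → Bool) × (ℕ → Bool) => (f p.1, f p.2)) ⁻¹'
      ({p : X × X | E p.1 p.2} ∩ C ×ˢ C) with hFdef
  have hfm : Measurable f := hfc.measurable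
  have hFmeas : MeasurableSet F :=
    ((hfm.comp measurable_fst).prodMk (hfm.comp measurable_snd)) hEC
  have hFsec : ∀ a : ℕ → Bool, IsMeagre {b : ℕ → Bool | (a, b) ∈ F} := by
    intro a
    apply countable_isMeagre cantor_nhds_ne
    have hsub : {b : ℕ → Bool | (a, b) ∈ F} ⊆ f ⁻¹' {z : X | E z (f a)} := by
      intro b hb
      exact hE.symm hb.1
    refine Set.Countable.mono hsub ((hcount (f a)).preimage hfinj)
  have hFmeager : IsMeagre F := kuratowski_ulam hFmeas.baireMeasurableSet hFsec
  obtain ⟨g, hgc, hgav⟩ := mycielski hFmeager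
  have hrefl : ∀ a : ℕ → Bool, (a, a) ∈ F := fun a =>
    ⟨hE.refl (f a), ⟨hfr (mem_range_self a), hfr (mem_range_self a)⟩⟩
  set F₀ : (ℕ → Bool) → X := f ∘ g with hF₀def
  have hF₀c : Continuous F₀ := hfc.comp hgc
  have hF₀inj : Function.Injective F₀ := by
    intro x y h
    by_contra hxy
    exact hgav x y hxy (hfinj h ▸ hrefl (g x))
  obtain ⟨hperf, hne⟩ := perfect_range hF₀c hF₀inj
  refine hthin ⟨range F₀, hperf, hne, ?_⟩
  rintro p ⟨x, rfl⟩ q ⟨y, rfl⟩ hpq hEpq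
  have hxy : x ≠ y := fun h => hpq (h ▸ rfl)
  exact hgav x y hxy ⟨hEpq, ⟨hfr (mem_range_self _), hfr (mem_range_self _)⟩⟩
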